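/- Every rank-one convex function f defined on a ball B_{2r}(x) ⊂ ℝ^(m×n) is Lipschitz on B_r(x), with Lipschitz constant at most C(n) · osc(f, B_{2r}(x)) / r, where osc denotes the oscillation (sup minus inf) of f. -/

import Mathlib

open Metric MeasureTheory Set RealInnerProductSpace

noncomputable section

/-- The space of m×n real matrices with the Frobenius (Euclidean) norm. -/
abbrev Mat (m n : ℕ) := EuclideanSpace ℝ (Fin m × Fin n)

/-- The rank-one matrix a ⊗ b with entries aᵢbⱼ. -/
def tensor {m n : ℕ} (a : EuclideanSpace ℝ (Fin m)) (b : EuclideanSpace ℝ (Fin n)) : Mat m n :=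
  WithLp.toLp 2 (fun p : Fin m × Fin n => a p.1 * b p.2)

def IsRankOne {m n : ℕ} (M : Mat m n) : Prop := ∃ a b, M = tensor a b

/-- f is rank-one convex on U: f is convex along every rank-one segment contained in U. -/
def RankOneConvexOn {m n : ℕ} (U : Set (Mat m n)) (f : Mat m n → ℝ) : Prop :=
  ∀ x y, x ∈ U → y ∈ U → segment ℝ x y ⊆ U → IsRankOne (y - x) →
    ∀ t ∈ Icc (0:ℝ) 1, f ((1 - t) • x + t • y) ≤ (1 - t) * f x + t * f y


lemma mat_norm_sq {m n : ℕ} (v : Mat m n) : ‖v‖ ^ 2 = ∑ p, (v p) ^ 2 := by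
  rw [EuclideanSpace.norm_eq, Real.sq_sqrt (by positivity)]
  simp [sq_abs]

lemma mat_inner_eq {m n : ℕ} (a b : Mat m n) : ⟪a, b⟫ = ∑ p, a p * b p := by
  simp [PiLp.inner_apply, RCLike.inner_apply, conj_trivial]
  exact Finset.sum_congr rfl fun _ _ => mul_comm _ _

lemma isRankOne_smul {m n : ℕ} {M : Mat m n} (c : ℝ) (h : IsRankOne M) : IsRankOne (c • M) := by
  obtain ⟨a, b, rfl⟩ := h
  refine ⟨c • a, b, PiLp.ext fun p => ?_⟩
  show c * tensor a b p = (c • a) p.1 * b p.2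
  show c * (a p.1 * b p.2) = (c * a p.1) * b p.2
  ring

lemma step_est {m n : ℕ} {x : Mat m n} {r : ℝ} {f : Mat m n → ℝ}
    (hf : RankOneConvexOn (ball x (2*r)) f)
    (hba : BddAbove (f '' ball x (2*r))) (hbb : BddBelow (f '' ball x (2*r)))
    {u v w : Mat m n} (hu : u ∈ ball x (2*r))
    (hw : w ∈ ball x (2*r)) {s : ℝ} (hs : 0 < s)
    (hrank : IsRankOne (v - u)) (hne : v ≠ u)
    (hwdef : w = v + (s / ‖v - u‖) • (v - u)) :
    f v - f u ≤ ((sSup (f '' ball x (2*r)) - sInf (f '' ball x (2*r))) / s) * ‖v - u‖ := by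
  set D := sSup (f '' ball x (2*r)) - sInf (f '' ball x (2*r)) with hD
  have hL : 0 < ‖v - u‖ := norm_pos_iff.2 (sub_ne_zero.2 hne)
  set L := ‖v - u‖ with hLdef
  have hwu : w - u = ((L + s) / L) • (v - u) := by
    rw [hwdef]
    have h : (L + s) / L = 1 + s / L := by field_simp
    rw [h, add_smul, one_smul]
    abel
  set t := L / (L + s) with ht
  have ht0 : 0 ≤ t := by positivity
  have ht1 : t ≤ 1 := by
    rw [ht, div_le_one (by linarith)]; linarith
  have hveq : (1 - t) • u + t • w = v := by
    have hsc : t * ((L + s) / L) = 1 := by rw [ht]; field_simp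
    have h1 : t • (w - u) = v - u := by rw [hwu, smul_smul, hsc, one_smul]
    have h2 : (1 - t) • u + t • w = u + t • (w - u) := by module
    rw [h2, h1]; abel
  have hrank' : IsRankOne (w - u) := by rw [hwu]; exact isRankOne_smul _ hrank
  have hseg : segment ℝ u w ⊆ ball x (2*r) := (convex_ball x (2*r)).segment_subset hu hw
  have hconv := hf u w hu hw hseg hrank' t ⟨ht0, ht1⟩
  rw [hveq] at hconv
  have hfw : f w ≤ sSup (f '' ball x (2*r)) := le_csSup hba ⟨w, hw, rfl⟩
  have hfu : sInf (f '' ball x (2*r)) ≤ f u := csInf_le hbb ⟨u, hu, rfl⟩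
  have hfu' : f u ≤ sSup (f '' ball x (2*r)) := le_csSup hba ⟨u, hu, rfl⟩
  have hD0 : 0 ≤ D := by rw [hD]; linarith
  have h1 : f v - f u ≤ t * (f w - f u) := by nlinarith
  have h2 : t * (f w - f u) ≤ t * D := by
    apply mul_le_mul_of_nonneg_left _ ht0
    rw [hD]; linarith
  have h3 : t ≤ L / s := by
    rw [ht]
    apply div_le_div_of_nonneg_left hL.le hs
    linarith
  have h4 : t * D ≤ (L / s) * D := mul_le_mul_of_nonneg_right h3 hD0
  calc f v - f u ≤ t * (f w - f u) := h1
    _ ≤ t * D := h2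
    _ ≤ (L / s) * D := h4
    _ = (D / s) * L := by ring

lemma arith1 {W A T I s r : ℝ} (h1 : W^2 ≤ A^2 + T + 2*I + s^2) (hT0 : T = 0)
    (hI : I ≤ A*s) (hA : A < r) (hA0 : 0 ≤ A) (hsr : s = r) :
    W^2 < (2*r)^2 := by nlinarith

lemma arith2 {W A B T I s q r : ℝ} (h1 : W^2 ≤ A^2 + T + 2*I + s^2) (hTB : T ≤ B^2)
    (hI : I ≤ A*s) (hA : A < r) (hB : B < r) (hA0 : 0 ≤ A) (hB0 : 0 ≤ B)
    (hs : 0 < s) (hsq : s * q = r) (hq22 : (2:ℝ) ≤ q^2) :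
    W^2 < (2*r)^2 := by
  nlinarith [mul_nonneg (mul_pos hs hs).le (sq_nonneg (q - 1)),
    mul_nonneg (mul_pos hs hs).le (sub_nonneg.2 hq22),
    mul_nonneg hA0 hs.le]

set_option maxHeartbeats 1000000 in
lemma one_side {m n : ℕ} (x : Mat m n) (r : ℝ) (hr : 0 < r) (f : Mat m n → ℝ)
    (hf : RankOneConvexOn (ball x (2*r)) f)
    (hba : BddAbove (f '' ball x (2*r))) (hbb : BddBelow (f '' ball x (2*r)))
    {y z : Mat m n} (hy : y ∈ ball x r) (hz : z ∈ ball x r) :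
    f y - f z ≤ (n * (sSup (f '' ball x (2*r)) - sInf (f '' ball x (2*r))) / r) * ‖y - z‖ := by
  set D := sSup (f '' ball x (2*r)) - sInf (f '' ball x (2*r)) with hD
  have hxmem : x ∈ ball x (2*r) := mem_ball_self (by linarith)
  have hD0 : 0 ≤ D := by
    have h1 : f x ≤ sSup (f '' ball x (2*r)) := le_csSup hba ⟨x, hxmem, rfl⟩
    have h2 : sInf (f '' ball x (2*r)) ≤ f x := csInf_le hbb ⟨x, hxmem, rfl⟩
    rw [hD]; linarith
  rcases Nat.eq_zero_or_pos n with hn | hn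
  · subst hn
    have hyz : y = z := by
      ext p
      exact p.2.elim0
    rw [hyz, sub_self, sub_self, norm_zero, mul_zero]
  -- main case : 1 ≤ n
  have hA : ‖y - x‖ < r := by rw [← dist_eq_norm]; exact mem_ball.1 hy
  have hB : ‖z - x‖ < r := by rw [← dist_eq_norm]; exact mem_ball.1 hz
  have hA0 : 0 ≤ ‖y - x‖ := norm_nonneg _
  have hB0 : 0 ≤ ‖z - x‖ := norm_nonneg _
  set q := Real.sqrt n with hqdef
  have hq : 0 < q := Real.sqrt_pos.2 (by exact_mod_cast hn)
  have hq2 : q ^ 2 = n := Real.sq_sqrt (by positivity)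
  set s := r / q with hsdef
  have hs : 0 < s := by positivity
  have hsq : s * q = r := div_mul_cancel₀ r hq.ne'
  set g : ℕ → Mat m n := fun k => WithLp.toLp 2 (fun p => if (p.2 : ℕ) < k then y p else z p) with hg
  have hgapp : ∀ k p, g k p = if (p.2 : ℕ) < k then y p else z p := fun k p => rfl
  have hg0 : g 0 = z := PiLp.ext fun p => by rw [hgapp]; simp
  have hgn : g n = y := PiLp.ext fun p => by rw [hgapp, if_pos p.2.isLt]
  -- membership of chain points
  have hgmem : ∀ k, g k ∈ ball x (2*r) := by
    intro k
    rw [mem_ball, dist_eq_norm]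
    have hsq2 : ‖g k - x‖ ^ 2 ≤ ‖y - x‖ ^ 2 + ‖z - x‖ ^ 2 := by
      rw [mat_norm_sq, mat_norm_sq, mat_norm_sq, ← Finset.sum_add_distrib]
      refine Finset.sum_le_sum fun p _ => ?_
      simp only [PiLp.sub_apply]
      by_cases h : (p.2 : ℕ) < k
      · rw [hgapp, if_pos h]; nlinarith [sq_nonneg (z p - x p)]
      · rw [hgapp, if_neg h]; nlinarith [sq_nonneg (y p - x p)]
    apply lt_of_pow_lt_pow_left₀ 2 (by positivity)
    nlinarith
  -- the difference applied
  have hRapp : ∀ k, ∀ p : Fin m × Fin n,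
      (g (k+1) - g k) p = if (p.2 : ℕ) = k then y p - z p else 0 := by
    intro k p
    simp only [PiLp.sub_apply]
    rw [hgapp, hgapp]
    rcases lt_trichotomy ((p.2 : ℕ)) k with h | h | h
    · rw [if_pos (by omega), if_pos h, if_neg (by omega), sub_self]
    · rw [if_pos (by omega), if_neg (by omega), if_pos h]
    · rw [if_neg (by omega), if_neg (by omega), if_neg (by omega), sub_self]
  -- rank one
  have hRrank : ∀ k, k < n → IsRankOne (g (k+1) - g k) := by
    intro k hk
    refine ⟨WithLp.toLp 2 (fun i => y (i, ⟨k, hk⟩) - z (i, ⟨k, hk⟩)),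
      WithLp.toLp 2 (fun j => if j = ⟨k, hk⟩ then 1 else 0), PiLp.ext fun p => ?_⟩
    rw [hRapp]
    show (if (p.2 : ℕ) = k then y p - z p else 0)
      = (y (p.1, ⟨k, hk⟩) - z (p.1, ⟨k, hk⟩)) * (if p.2 = ⟨k, hk⟩ then 1 else 0)
    by_cases h : (p.2 : ℕ) = k
    · have hp2 : p.2 = ⟨k, hk⟩ := Fin.ext h
      rw [if_pos h, if_pos hp2, mul_one, ← hp2]
    · have hp2 : p.2 ≠ ⟨k, hk⟩ := fun e => h (by rw [e])
      rw [if_neg h, if_neg hp2, mul_zero]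
  -- step estimate
  have hstep : ∀ k, k < n → f (g (k+1)) - f (g k) ≤ (D / s) * ‖g (k+1) - g k‖ := by
    intro k hk
    by_cases hR0 : g (k+1) = g k
    · rw [hR0, sub_self, sub_self, norm_zero, mul_zero]
    · have hL : 0 < ‖g (k+1) - g k‖ := norm_pos_iff.2 (sub_ne_zero.2 hR0)
      set u' := (s / ‖g (k+1) - g k‖) • (g (k+1) - g k) with hu'
      have hu'app : ∀ p, u' p = (s / ‖g (k+1) - g k‖) * ((g (k+1) - g k) p) := fun p => rfl
      have hu'norm : ‖u'‖ = s := by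
        rw [hu', norm_smul, Real.norm_eq_abs, abs_of_pos (by positivity),
          div_mul_cancel₀ _ hL.ne']
      have hu'zero : ∀ p : Fin m × Fin n, (p.2 : ℕ) ≠ k → u' p = 0 := by
        intro p hp
        rw [hu'app, hRapp, if_neg hp, mul_zero]
      -- pointwise bound
      have hpt : ∀ p : Fin m × Fin n, ((g (k+1) + u' - x) p) ^ 2 ≤
          (y p - x p) ^ 2 + (if k + 1 ≤ (p.2 : ℕ) then (z p - x p) ^ 2 else 0)
            + 2 * ((y p - x p) * (u' p)) + (u' p) ^ 2 := by
        intro p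
        simp only [PiLp.add_apply, PiLp.sub_apply]
        by_cases h : (p.2 : ℕ) < k + 1
        · rw [hgapp, if_pos h, if_neg (by omega)]
          apply le_of_eq; ring
        · rw [hgapp, if_neg h, if_pos (by omega), hu'zero p (by omega)]
          nlinarith [sq_nonneg (y p - x p)]
      set T := ∑ p : Fin m × Fin n, (if k + 1 ≤ (p.2 : ℕ) then (z p - x p) ^ 2 else 0) with hT
      have hsum1 : ‖g (k+1) + u' - x‖ ^ 2 ≤
          ‖y - x‖ ^ 2 + T + 2 * ⟪y - x, u'⟫ + s ^ 2 := by
        have e1 : ‖y - x‖ ^ 2 = ∑ p, (y p - x p) ^ 2 := by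
          rw [mat_norm_sq]; simp only [PiLp.sub_apply]
        have e2 : ⟪y - x, u'⟫ = ∑ p, (y p - x p) * (u' p) := by
          rw [mat_inner_eq]; simp only [PiLp.sub_apply]
        have e3 : s ^ 2 = ∑ p, (u' p) ^ 2 := by rw [← hu'norm, mat_norm_sq]
        rw [mat_norm_sq, e1, e2, e3, hT, Finset.mul_sum, ← Finset.sum_add_distrib,
          ← Finset.sum_add_distrib, ← Finset.sum_add_distrib]
        exact Finset.sum_le_sum fun p _ => hpt p
      have hTB : T ≤ ‖z - x‖ ^ 2 := by
        rw [hT, mat_norm_sq]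
        refine Finset.sum_le_sum fun p _ => ?_
        simp only [PiLp.sub_apply]
        split
        · exact le_refl _
        · positivity
      have hinner : ⟪y - x, u'⟫ ≤ ‖y - x‖ * s := by
        rw [← hu'norm]; exact real_inner_le_norm _ _
      have hwmem : g (k+1) + u' ∈ ball x (2*r) := by
        rw [mem_ball, dist_eq_norm]
        refine lt_of_pow_lt_pow_left₀ 2 (by positivity) ?_
        rcases Nat.lt_or_ge n 2 with h2 | h2
        · -- n = 1
          have hn1 : n = 1 := by omega
          have hT0 : T = 0 := by
            rw [hT]
            apply Finset.sum_eq_zero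
            intro p _
            have hlt := p.2.isLt
            rw [if_neg (by omega)]
          have hq1 : q = 1 := by rw [hqdef, hn1]; simp
          have hsr : s = r := by rw [hsdef, hq1, div_one]
          exact arith1 hsum1 hT0 hinner hA hA0 hsr
        · -- 2 ≤ n
          have hq22 : (2:ℝ) ≤ q ^ 2 := by rw [hq2]; exact_mod_cast h2
          exact arith2 hsum1 hTB hinner hA hB hA0 hB0 hs hsq hq22
      exact step_est hf hba hbb (hgmem k) hwmem hs (hRrank k hk) hR0 rfl
  -- telescope
  have htel : f y - f z = ∑ k ∈ Finset.range n, (f (g (k+1)) - f (g k)) := by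
    rw [Finset.sum_range_sub (fun k => f (g k)), hg0, hgn]
  -- sum of squares of steps
  have hsumsq : ∑ k ∈ Finset.range n, ‖g (k+1) - g k‖ ^ 2 = ‖y - z‖ ^ 2 := by
    simp_rw [mat_norm_sq]
    rw [Finset.sum_comm]
    refine Finset.sum_congr rfl fun p _ => ?_
    have : ∀ k ∈ Finset.range n, ((g (k+1) - g k) p) ^ 2
        = if (p.2 : ℕ) = k then ((y - z) p) ^ 2 else 0 := by
      intro k _
      rw [hRapp]
      by_cases h : (p.2 : ℕ) = k
      · rw [if_pos h, if_pos h]; simp [PiLp.sub_apply]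
      · rw [if_neg h, if_neg h]; ring
    rw [Finset.sum_congr rfl this, Finset.sum_ite_eq]
    rw [if_pos (Finset.mem_range.2 p.2.isLt)]
  -- Cauchy-Schwarz
  have hCS : ∑ k ∈ Finset.range n, ‖g (k+1) - g k‖ ≤ q * ‖y - z‖ := by
    have h1 : (∑ k ∈ Finset.range n, ‖g (k+1) - g k‖) ^ 2 ≤ n * ‖y - z‖ ^ 2 := by
      calc (∑ k ∈ Finset.range n, ‖g (k+1) - g k‖) ^ 2
          ≤ (Finset.range n).card * ∑ k ∈ Finset.range n, ‖g (k+1) - g k‖ ^ 2 :=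
            sq_sum_le_card_mul_sum_sq
        _ = n * ‖y - z‖ ^ 2 := by rw [Finset.card_range, hsumsq]
    have h0 : 0 ≤ ∑ k ∈ Finset.range n, ‖g (k+1) - g k‖ :=
      Finset.sum_nonneg fun k _ => norm_nonneg _
    calc ∑ k ∈ Finset.range n, ‖g (k+1) - g k‖
        = Real.sqrt ((∑ k ∈ Finset.range n, ‖g (k+1) - g k‖) ^ 2) := (Real.sqrt_sq h0).symm
      _ ≤ Real.sqrt (n * ‖y - z‖ ^ 2) := Real.sqrt_le_sqrt h1
      _ = q * ‖y - z‖ := by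
          rw [Real.sqrt_mul (by positivity), Real.sqrt_sq (norm_nonneg _), hqdef]
  -- finish
  have hfinal : f y - f z ≤ (D / s) * (q * ‖y - z‖) := by
    rw [htel]
    calc ∑ k ∈ Finset.range n, (f (g (k+1)) - f (g k))
        ≤ ∑ k ∈ Finset.range n, (D / s) * ‖g (k+1) - g k‖ :=
          Finset.sum_le_sum fun k hk => hstep k (Finset.mem_range.1 hk)
      _ = (D / s) * ∑ k ∈ Finset.range n, ‖g (k+1) - g k‖ := by rw [Finset.mul_sum]
      _ ≤ (D / s) * (q * ‖y - z‖) := by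
          apply mul_le_mul_of_nonneg_left hCS (by positivity)
  have heq : (D / s) * (q * ‖y - z‖) = (n * D / r) * ‖y - z‖ := by
    rw [← hq2, hsdef]
    field_simp
  rw [← heq]
  exact hfinal

/-- Interior Lipschitz estimate for rank-one convex functions:
Lip(f, B_r(x)) ≤ n · osc(f, B_{2r}(x)) / r. -/
theorem stmt2 {m n : ℕ} (x : Mat m n) (r : ℝ) (hr : 0 < r) (f : Mat m n → ℝ)
    (hf : RankOneConvexOn (ball x (2*r)) f)
    (hba : BddAbove (f '' ball x (2*r))) (hbb : BddBelow (f '' ball x (2*r))) :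
    ∀ y ∈ ball x r, ∀ z ∈ ball x r,
      |f y - f z| ≤ (n * (sSup (f '' ball x (2*r)) - sInf (f '' ball x (2*r))) / r) * ‖y - z‖ := by
  intro y hy z hz
  rw [abs_sub_le_iff]
  constructor
  · exact one_side x r hr f hf hba hbb hy hz
  · have h := one_side x r hr f hf hba hbb hz hy
    rwa [norm_sub_rev] at h
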